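/- Let (X_k)_{k∈ℤ} be nonzero vectors in ℝⁿ and (A_k)_{k∈ℤ} linear maps ℝⁿ → ℝⁿ with A_k X_k = X_{k+1} for all k. Let P_k denote the orthogonal projection of ℝⁿ onto the orthogonal complement V_k of X_k (so ker P_k = span{X_k}). Suppose there exists L₁ > 0 such that for every sequence (z_k)_{k∈ℤ} with |z_k| ≤ 1 and every natural number N there exist real numbers s_k and vectors x_k with |x_k| ≤ L₁ satisfying x_{k+1} = A_k x_k + s_k X_{k+1} + z_{k+1} for all k ∈ [−N, N−1]. Then for every sequence (b_k)_{k∈ℤ} with b_k ∈ V_k and |b_k| ≤ 1 for all k, there exists a sequence (v_k)_{k∈ℤ} with v_k ∈ V_k, |v_k| ≤ L₁, and v_{k+1} = P_{k+1}(A_k v_k) + b_{k+1} for all k ∈ ℤ. -/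

import Mathlib

open Set

noncomputable section

/-- Euclidean space ℝⁿ. -/
abbrev Euc (n : ℕ) := EuclideanSpace ℝ (Fin n)

/-- The orthogonal projection of ℝⁿ onto the orthogonal complement of `u`
(its kernel is `span {u}` when `u ≠ 0`). -/
def projPerp {n : ℕ} (u : Euc n) : Euc n →L[ℝ] Euc n :=
  ((ℝ ∙ u)ᗮ).subtypeL.comp (Submodule.orthogonalProjection ((ℝ ∙ u)ᗮ))

lemma projPerp_mem {n : ℕ} (u y : Euc n) : projPerp u y ∈ (ℝ ∙ u)ᗮ :=
  SetLike.coe_mem (Submodule.orthogonalProjection ((ℝ ∙ u)ᗮ) y)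

lemma projPerp_norm_le {n : ℕ} (u y : Euc n) : ‖projPerp u y‖ ≤ ‖y‖ := by
  have h1 : ‖projPerp u y‖ = ‖Submodule.orthogonalProjection ((ℝ ∙ u)ᗮ) y‖ := rfl
  rw [h1]
  calc ‖Submodule.orthogonalProjection ((ℝ ∙ u)ᗮ) y‖
      ≤ ‖Submodule.orthogonalProjection ((ℝ ∙ u)ᗮ)‖ * ‖y‖ := (Submodule.orthogonalProjection ((ℝ ∙ u)ᗮ)).le_opNorm y
    _ ≤ 1 * ‖y‖ := by
        exact mul_le_mul_of_nonneg_right (Submodule.orthogonalProjectionOnto_norm_le _) (norm_nonneg y)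
    _ = ‖y‖ := one_mul _

lemma projPerp_of_mem {n : ℕ} {u y : Euc n} (h : y ∈ (ℝ ∙ u)ᗮ) : projPerp u y = y :=
  congrArg Subtype.val (Submodule.orthogonalProjectionOnto_mem_subspace_eq_self (⟨y, h⟩ : (ℝ ∙ u)ᗮ))

lemma projPerp_of_mem_span {n : ℕ} {u y : Euc n} (h : y ∈ (ℝ ∙ u)) : projPerp u y = 0 := by
  have : y ∈ ((ℝ ∙ u)ᗮ)ᗮ := by rwa [Submodule.orthogonal_orthogonal]
  have := Submodule.orthogonalProjectionOnto_apply_of_mem_orthogonal this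
  simp only [projPerp, ContinuousLinearMap.comp_apply, this]
  rfl

/-- Corollary 4.4 of the paper: from uniformly bounded solvability of the
finite systems `x_{k+1} = A_k x_k + s_k X_{k+1} + z_{k+1}` one obtains bounded solutions of
`v_{k+1} = P_{k+1}(A_k v_k) + b_{k+1}` on all of ℤ, with `v_k ⟂ X_k`. -/
theorem statement1 {n : ℕ} (Xv : ℤ → Euc n) (hXv : ∀ k, Xv k ≠ 0)
    (A : ℤ → (Euc n →L[ℝ] Euc n)) (hA : ∀ k, A k (Xv k) = Xv (k + 1))
    (L₁ : ℝ) (hL₁ : 0 < L₁)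
    (hsolv : ∀ z : ℤ → Euc n, (∀ k, ‖z k‖ ≤ 1) → ∀ N : ℕ,
      ∃ (s : ℤ → ℝ) (x : ℤ → Euc n),
        (∀ k ∈ Icc (-(N : ℤ)) (N : ℤ), ‖x k‖ ≤ L₁) ∧
        ∀ k ∈ Icc (-(N : ℤ)) ((N : ℤ) - 1),
          x (k + 1) = A k (x k) + s k • Xv (k + 1) + z (k + 1)) :
    ∀ b : ℤ → Euc n, (∀ k, b k ∈ (ℝ ∙ Xv k)ᗮ) → (∀ k, ‖b k‖ ≤ 1) →
      ∃ v : ℤ → Euc n, ∀ k : ℤ,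
        v k ∈ (ℝ ∙ Xv k)ᗮ ∧ ‖v k‖ ≤ L₁ ∧
        v (k + 1) = projPerp (Xv (k + 1)) (A k (v k)) + b (k + 1) := by
  intro b hb hbnorm
  -- Step 1: finite-window solutions
  have finsol : ∀ N : ℕ, ∃ v : ℤ → Euc n,
      (∀ k, v k ∈ (ℝ ∙ Xv k)ᗮ ∧ ‖v k‖ ≤ L₁) ∧
      ∀ k ∈ Icc (-(N : ℤ)) ((N : ℤ) - 1),
        v (k + 1) = projPerp (Xv (k + 1)) (A k (v k)) + b (k + 1) := by
    intro N
    obtain ⟨s, x, hxb, hxe⟩ := hsolv b hbnorm N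
    refine ⟨fun k => if k ∈ Icc (-(N : ℤ)) (N : ℤ) then projPerp (Xv k) (x k) else 0, ?_, ?_⟩
    · intro k
      by_cases hk : k ∈ Icc (-(N : ℤ)) (N : ℤ)
      · simp only [hk, if_true]
        exact ⟨projPerp_mem _ _, (projPerp_norm_le _ _).trans (hxb k hk)⟩
      · simp only [hk, if_false]
        exact ⟨Submodule.zero_mem _, by simpa using hL₁.le⟩
    · intro k hk
      obtain ⟨hk1, hk2⟩ := hk
      have hkmem : k ∈ Icc (-(N : ℤ)) (N : ℤ) := ⟨hk1, by omega⟩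
      have hk1mem : k + 1 ∈ Icc (-(N : ℤ)) (N : ℤ) := ⟨by omega, by omega⟩
      simp only [hkmem, hk1mem, if_true]
      have heq := hxe k ⟨hk1, hk2⟩
      -- project the equation
      have hP : projPerp (Xv (k + 1)) (x (k + 1))
          = projPerp (Xv (k + 1)) (A k (x k)) + b (k + 1) := by
        rw [heq]
        rw [map_add, map_add, map_smul]
        rw [projPerp_of_mem_span (Submodule.mem_span_singleton_self (Xv (k + 1)))]
        rw [projPerp_of_mem (hb (k + 1))]
        simp
      have hdiff : x k - projPerp (Xv k) (x k) ∈ (ℝ ∙ Xv k) := by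
        have := Submodule.sub_starProjection_mem_orthogonal (K := (ℝ ∙ Xv k)ᗮ) (x k)
        rwa [Submodule.orthogonal_orthogonal] at this
      obtain ⟨c, hc⟩ := Submodule.mem_span_singleton.mp hdiff
      have hx : x k = projPerp (Xv k) (x k) + c • Xv k := by
        rw [hc]; abel
      have hPA : projPerp (Xv (k + 1)) (A k (x k))
          = projPerp (Xv (k + 1)) (A k (projPerp (Xv k) (x k))) := by
        have h0 : A k (x k) = A k (projPerp (Xv k) (x k)) + c • Xv (k + 1) := by
          conv_lhs => rw [hx]
          rw [map_add, map_smul, hA]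
        rw [h0, map_add, map_smul,
          projPerp_of_mem_span (Submodule.mem_span_singleton_self (Xv (k + 1)))]
        simp
      rw [hP, hPA]
  -- Step 2: take a limit along an ultrafilter
  choose vN hvN1 hvN2 using finsol
  haveI : (Filter.atTop : Filter ℕ).NeBot := Filter.atTop_neBot
  set U : Ultrafilter ℕ := Ultrafilter.of Filter.atTop with hU
  have hUle : (U : Filter ℕ) ≤ Filter.atTop := Ultrafilter.of_le _
  have key : ∀ k : ℤ, ∃ y ∈ Metric.closedBall (0 : Euc n) L₁,
      Filter.Tendsto (fun N => vN N k) U (nhds y) := by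
    intro k
    have hcomp : IsCompact (Metric.closedBall (0 : Euc n) L₁) :=
      isCompact_closedBall _ _
    have hmem : (U.map (fun N => vN N k) : Filter (Euc n))
        ≤ Filter.principal (Metric.closedBall (0 : Euc n) L₁) := by
      rw [Filter.le_principal_iff, Ultrafilter.mem_coe, Ultrafilter.mem_map]
      exact Filter.univ_mem' fun N => by
        simp only [Set.mem_preimage, Metric.mem_closedBall, dist_zero_right]
        exact (hvN1 N k).2
    obtain ⟨y, hy, hly⟩ := hcomp.ultrafilter_le_nhds (U.map (fun N => vN N k)) hmem
    exact ⟨y, hy, hly⟩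
  choose v hv1 hv2 using key
  refine ⟨v, fun k => ⟨?_, ?_, ?_⟩⟩
  · -- membership: closed subspace
    have hcl : IsClosed ((ℝ ∙ Xv k)ᗮ : Set (Euc n)) :=
      Submodule.closed_of_finiteDimensional _
    exact hcl.mem_of_tendsto (hv2 k)
      (Filter.Eventually.of_forall fun N => (hvN1 N k).1)
  · simpa [Metric.mem_closedBall, dist_zero_right] using hv1 k
  · -- the equation, by uniqueness of limits
    have hev : ∀ᶠ N in (U : Filter ℕ),
        vN N (k + 1) = projPerp (Xv (k + 1)) (A k (vN N k)) + b (k + 1) := by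
      apply hUle
      filter_upwards [Filter.eventually_ge_atTop (k.natAbs + 1)] with N hN
      exact hvN2 N k ⟨by omega, by omega⟩
    have h1 : Filter.Tendsto (fun N => vN N (k + 1)) U (nhds (v (k + 1))) := hv2 (k + 1)
    have h2 : Filter.Tendsto (fun N => projPerp (Xv (k + 1)) (A k (vN N k)) + b (k + 1)) U
        (nhds (projPerp (Xv (k + 1)) (A k (v k)) + b (k + 1))) := by
      exact (((projPerp (Xv (k + 1))).continuous.tendsto _).comp
        (((A k).continuous.tendsto _).comp (hv2 k))).add tendsto_const_nhds
    have h1' : Filter.Tendsto (fun N => vN N (k + 1)) U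
        (nhds (projPerp (Xv (k + 1)) (A k (v k)) + b (k + 1))) :=
      h2.congr' (hev.mono fun N h => h.symm)
    exact tendsto_nhds_unique h1 h1'
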